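/- Let g ∈ L¹(ℝ^d) ∩ L²(ℝ^d). Then there exists a sequence of Schwartz functions φ_n such that the Fourier transforms 𝓕φ_n are uniformly bounded in L^∞(ℝ^d) and ∫ g(x) · 𝓕φ_n(x) dx → ‖g‖_{L¹} as n → ∞. -/

import Mathlib

open MeasureTheory Filter Complex

noncomputable section

open scoped FourierTransform RealInnerProductSpace

/-- The Fourier transform with normalization `(2π)^{-d/2} ∫ e^{-ix·ξ} f(x) dx`. -/
def FT (d : ℕ) (f : EuclideanSpace ℝ (Fin d) → ℂ) (ξ : EuclideanSpace ℝ (Fin d)) : ℂ :=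
  (2 * Real.pi : ℂ) ^ (-(d : ℂ) / 2) * ∫ x, Complex.exp (-Complex.I * ((inner ℝ x ξ : ℝ) : ℂ)) * f x

/-- A smooth compactly supported function as a Schwartz map. -/
def mkSchwartz {d : ℕ} (f : EuclideanSpace ℝ (Fin d) → ℂ) (h1 : ContDiff ℝ (⊤ : ℕ∞) f)
    (h2 : HasCompactSupport f) : SchwartzMap (EuclideanSpace ℝ (Fin d)) ℂ where
  toFun := f
  smooth' := h1
  decay' := by
    intro k n
    obtain ⟨R, hR⟩ := h2.isBounded.subset_closedBall (0 : EuclideanSpace ℝ (Fin d))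
    obtain ⟨M, hM⟩ := (h1.continuous_iteratedFDeriv (mod_cast le_top)).bounded_above_of_compact_support
      (h2.iteratedFDeriv n)
    refine ⟨(max R 0) ^ k * max M 0, fun x => ?_⟩
    by_cases hx : x ∈ tsupport f
    · have h1' : ‖x‖ ≤ max R 0 := by
        have h := hR hx
        rw [Metric.mem_closedBall, dist_zero_right] at h
        exact le_trans h (le_max_left _ _)
      exact mul_le_mul (pow_le_pow_left₀ (norm_nonneg x) h1' k)
        (le_trans (hM x) (le_max_left _ _)) (norm_nonneg _)
        (by positivity)
    · have : iteratedFDeriv ℝ n f x = 0 := by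
        by_contra h
        exact hx (support_iteratedFDeriv_subset n (by simpa using h))
      simp only [this, norm_zero, mul_zero]
      positivity

lemma mkSchwartz_apply {d : ℕ} (f : EuclideanSpace ℝ (Fin d) → ℂ) (h1 : ContDiff ℝ (⊤ : ℕ∞) f)
    (h2 : HasCompactSupport f) (x : EuclideanSpace ℝ (Fin d)) :
    mkSchwartz f h1 h2 x = f x := rfl

lemma exists_FT_eq (d : ℕ) (ψ : SchwartzMap (EuclideanSpace ℝ (Fin d)) ℂ) :
    ∃ φ : SchwartzMap (EuclideanSpace ℝ (Fin d)) ℂ, ∀ ξ, FT d (fun x => φ x) ξ = ψ ξ := by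
  have h2π : (2 * Real.pi : ℝ) ≠ 0 := by positivity
  set V := EuclideanSpace ℝ (Fin d)
  set e : V ≃L[ℝ] V :=
    (LinearEquiv.smulOfNeZero ℝ V (2 * Real.pi) h2π).toContinuousLinearEquiv with he
  set c : ℂ := (2 * Real.pi : ℂ) ^ (-(d : ℂ) / 2) with hcdef
  have hc : c ≠ 0 := by
    rw [hcdef]
    intro h
    rw [Complex.cpow_eq_zero_iff] at h
    have : (2 * Real.pi : ℂ) ≠ 0 := by
      simpa using Complex.ofReal_ne_zero.2 h2π
    exact this h.1
  set Ψ : SchwartzMap V ℂ := c⁻¹ • (SchwartzMap.compCLMOfContinuousLinearEquiv ℝ e ψ) with hΨ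
  refine ⟨(SchwartzMap.fourierTransformCLE ℂ (SchwartzMap V ℂ)).symm Ψ, fun ξ => ?_⟩
  set φ := (SchwartzMap.fourierTransformCLE ℂ (SchwartzMap V ℂ)).symm Ψ with hφ
  have hF : 𝓕 (fun x => φ x) = fun w => Ψ w := by
    have h1 : (SchwartzMap.fourierTransformCLE ℂ (SchwartzMap V ℂ)) φ = Ψ :=
      (SchwartzMap.fourierTransformCLE ℂ (SchwartzMap V ℂ)).apply_symm_apply Ψ
    show 𝓕 (φ : V → ℂ) = (Ψ : V → ℂ)
    rw [← SchwartzMap.fourier_coe, ← h1]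
    rfl
  have key : (∫ x, Complex.exp (-Complex.I * ((inner ℝ x ξ : ℝ) : ℂ)) * φ x)
      = 𝓕 (fun x => φ x) ((2 * Real.pi)⁻¹ • ξ) := by
    rw [Real.fourier_eq']
    congr 1
    ext x
    rw [smul_eq_mul]
    congr 2
    rw [real_inner_smul_right]
    have h2πc : ((2 : ℂ) * (Real.pi : ℂ)) ≠ 0 := by
      simpa using Complex.ofReal_ne_zero.2 h2π
    set t : ℝ := inner ℝ x ξ with ht
    push_cast
    field_simp
  show c * _ = _
  rw [key, hF]
  rw [hΨ]
  simp only [SchwartzMap.smul_apply, SchwartzMap.compCLMOfContinuousLinearEquiv_apply,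
    Function.comp_apply]
  have he' : e ((2 * Real.pi)⁻¹ • ξ) = ξ := by
    rw [he]
    simp only [LinearEquiv.coe_toContinuousLinearEquiv', LinearEquiv.smulOfNeZero_apply]
    rw [smul_smul, mul_inv_cancel₀ h2π, one_smul]
  rw [he']
  rw [smul_eq_mul]
  rw [← mul_assoc, mul_inv_cancel₀ hc, one_mul]

open scoped Convolution

/-- For `g ∈ L¹ ∩ L²` there are Schwartz functions `φ_n` whose Fourier transforms are
uniformly bounded in `L^∞` with `∫ g · 𝓕φ_n → ‖g‖_{L¹}`. -/
theorem test_function_selection (d : ℕ) (g : EuclideanSpace ℝ (Fin d) → ℂ)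
    (hg1 : Integrable g volume) (hg2 : MemLp g 2 volume) :
    ∃ (φ : ℕ → SchwartzMap (EuclideanSpace ℝ (Fin d)) ℂ) (Cb : ℝ),
      (∀ n ξ, ‖FT d (fun x => φ n x) ξ‖ ≤ Cb) ∧
      Tendsto (fun n : ℕ => ∫ x, g x * FT d (fun y => φ n y) x) atTop
        (nhds (((∫ x, ‖g x‖) : ℝ) : ℂ)) := by
  classical
  set h : EuclideanSpace ℝ (Fin d) → ℂ := fun x => (starRingEnd ℂ) (g x) / (‖g x‖ : ℂ) with hhdef
  have hmeas : AEStronglyMeasurable h volume := by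
    have hm : Measurable fun z : ℂ => (starRingEnd ℂ) z / (‖z‖ : ℂ) := by
      exact (Complex.continuous_conj.measurable).div
        ((Complex.continuous_ofReal.comp continuous_norm).measurable)
    exact (hm.comp_aemeasurable hg1.aemeasurable).aestronglyMeasurable
  have hbd : ∀ x, ‖h x‖ ≤ 1 := by
    intro x
    have : ‖h x‖ = ‖g x‖ / ‖g x‖ := by
      rw [hhdef]
      simp only [norm_div, RCLike.norm_conj, Complex.norm_real, norm_norm]
    rw [this]
    exact div_self_le_one _
  have hgh : ∀ x, g x * h x = ((‖g x‖ : ℝ) : ℂ) := by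
    intro x
    by_cases hx : g x = 0
    · simp [hhdef, hx]
    · have hne : ((‖g x‖ : ℝ) : ℂ) ≠ 0 := by
        simp [norm_eq_zero, hx]
      rw [hhdef]
      field_simp
      rw [Complex.mul_conj]
      push_cast
      rw [Complex.normSq_eq_norm_sq]
      push_cast
      rw [sq]
  have hloc : LocallyIntegrable h volume := by
    rw [locallyIntegrable_iff]
    intro K hK
    exact Measure.integrableOn_of_bounded hK.measure_ne_top hmeas
      (Eventually.of_forall fun x => hbd x)
  -- the bump functions
  set φb : ℕ → ContDiffBump (0 : EuclideanSpace ℝ (Fin d)) := fun n =>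
    { rIn := ((n : ℝ) + 1)⁻¹
      rOut := 2 * ((n : ℝ) + 1)⁻¹
      rIn_pos := by positivity
      rIn_lt_rOut := by
        have : (0 : ℝ) < ((n : ℝ) + 1)⁻¹ := by positivity
        linarith } with hφb
  set f : ℕ → EuclideanSpace ℝ (Fin d) → ℂ := fun n =>
    (Metric.closedBall (0 : EuclideanSpace ℝ (Fin d)) n).indicator h with hfdef
  have hfmeas : ∀ n, AEStronglyMeasurable (f n) volume := fun n =>
    hmeas.indicator measurableSet_closedBall
  have hfbd : ∀ n x, ‖f n x‖ ≤ 1 := by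
    intro n x
    show ‖(Metric.closedBall (0 : EuclideanSpace ℝ (Fin d)) n).indicator h x‖ ≤ 1
    by_cases hx : x ∈ Metric.closedBall (0 : EuclideanSpace ℝ (Fin d)) n
    · rw [Set.indicator_of_mem hx]; exact hbd x
    · rw [Set.indicator_of_notMem hx]; simp
  have hfc : ∀ n, HasCompactSupport (f n) := fun n =>
    HasCompactSupport.intro (isCompact_closedBall _ _)
      (fun x hx => Set.indicator_of_notMem hx h)
  have hfloc : ∀ n, LocallyIntegrable (f n) volume := by
    intro n
    have : IntegrableOn h (Metric.closedBall (0 : EuclideanSpace ℝ (Fin d)) n) volume :=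
      hloc.integrableOn_isCompact (isCompact_closedBall _ _)
    exact ((integrable_indicator_iff measurableSet_closedBall).2
      this).locallyIntegrable
  set ψ : ℕ → EuclideanSpace ℝ (Fin d) → ℂ := fun n =>
    (φb n).normed volume ⋆[ContinuousLinearMap.lsmul ℝ ℝ, volume] (f n) with hψdef
  have hψsmooth : ∀ n, ContDiff ℝ (⊤ : ℕ∞) (ψ n) := fun n =>
    (φb n).hasCompactSupport_normed.contDiff_convolution_left _
      (φb n).contDiff_normed (hfloc n)
  have hψsupp : ∀ n, HasCompactSupport (ψ n) := fun n =>
    HasCompactSupport.convolution _ (φb n).hasCompactSupport_normed (hfc n)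
  have hψbd : ∀ n x, ‖ψ n x‖ ≤ 3 := by
    intro n x₀
    have h2 : dist (ψ n x₀) (f n x₀) ≤ 2 := by
      apply ContDiffBump.dist_normed_convolution_le (hfmeas n)
      intro x _
      calc dist (f n x) (f n x₀) ≤ ‖f n x‖ + ‖f n x₀‖ := dist_le_norm_add_norm _ _
        _ ≤ 2 := by have := hfbd n x; have := hfbd n x₀; linarith
    have h3 := dist_triangle (ψ n x₀) (f n x₀) 0
    rw [dist_zero_right, dist_zero_right] at h3
    have h5 := hfbd n x₀
    have h6 : dist (ψ n x₀) (f n x₀) = ‖ψ n x₀ - f n x₀‖ := dist_eq_norm _ _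
    have h7 : ‖ψ n x₀‖ ≤ ‖ψ n x₀ - f n x₀‖ + ‖f n x₀‖ := by
      calc ‖ψ n x₀‖ = ‖ψ n x₀ - f n x₀ + f n x₀‖ := by ring_nf
        _ ≤ _ := norm_add_le _ _
    linarith
  -- a.e. convergence of mollifications of h
  have hout : Tendsto (fun n : ℕ => (φb n).rOut) atTop (nhds 0) := by
    have h1 : Tendsto (fun n : ℕ => ((n : ℝ) + 1)⁻¹) atTop (nhds 0) :=
      tendsto_one_div_add_atTop_nhds_zero_nat.congr (by intro n; rw [one_div])
    have := h1.const_mul (2 : ℝ)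
    rw [mul_zero] at this
    exact this
  have haeconv : ∀ᵐ x₀ ∂(volume : Measure (EuclideanSpace ℝ (Fin d))),
      Tendsto (fun n => ((φb n).normed volume ⋆[ContinuousLinearMap.lsmul ℝ ℝ, volume] h) x₀)
        atTop (nhds (h x₀)) := by
    apply ContDiffBump.ae_convolution_tendsto_right_of_locallyIntegrable (K := 2) hout
      (Eventually.of_forall fun n => le_of_eq rfl) hloc
  -- eventual equality gives a.e. convergence of ψ
  have haeψ : ∀ᵐ x₀ ∂(volume : Measure (EuclideanSpace ℝ (Fin d))),
      Tendsto (fun n => ψ n x₀) atTop (nhds (h x₀)) := by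
    filter_upwards [haeconv] with x₀ hx₀
    apply Tendsto.congr' _ hx₀
    rw [eventuallyEq_iff_exists_mem]
    obtain ⟨N, hN⟩ := exists_nat_ge (‖x₀‖ + 2)
    refine ⟨Set.Ici N, Ici_mem_atTop N, fun n hn => ?_⟩
    have hn' : ‖x₀‖ + 2 ≤ n := le_trans hN (by exact_mod_cast Nat.cast_le.2 hn)
    rw [hψdef]
    simp only
    rw [convolution_def, convolution_def]
    congr 1
    ext t
    by_cases ht : (φb n).normed volume t = 0
    · simp [ht]
    · have htsupp : t ∈ Function.support ((φb n).normed volume) := ht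
      rw [(φb n).support_normed_eq] at htsupp
      have ht2 : ‖t‖ < 2 := by
        have h1 : ‖t‖ < (φb n).rOut := by simpa [dist_zero_right] using htsupp
        have h2 : (φb n).rOut ≤ 2 := by
          rw [hφb]
          simp only
          have h3 : ((n : ℝ) + 1)⁻¹ ≤ 1 := by
            rw [inv_le_one_iff₀]; right; linarith [Nat.cast_nonneg (α := ℝ) n]
          linarith
        linarith
      have hmem : x₀ - t ∈ Metric.closedBall (0 : EuclideanSpace ℝ (Fin d)) n := by
        rw [Metric.mem_closedBall, dist_zero_right]
        calc ‖x₀ - t‖ ≤ ‖x₀‖ + ‖t‖ := norm_sub_le _ _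
          _ ≤ (n : ℝ) := by linarith
      congr 1
      rw [hfdef]
      simp only
      rw [Set.indicator_of_mem hmem]
  -- package into Schwartz maps
  set Ψ : ℕ → SchwartzMap (EuclideanSpace ℝ (Fin d)) ℂ := fun n =>
    mkSchwartz (ψ n) (hψsmooth n) (hψsupp n) with hΨdef
  choose φ hφ using fun n => exists_FT_eq d (Ψ n)
  refine ⟨φ, 3, ?_, ?_⟩
  · intro n ξ
    rw [hφ n ξ]
    exact hψbd n ξ
  · have heq : (fun n : ℕ => ∫ x, g x * FT d (fun y => φ n y) x)
        = fun n : ℕ => ∫ x, g x * ψ n x := by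
      funext n
      refine integral_congr_ae (Eventually.of_forall fun x => ?_)
      show g x * FT d (fun y => (φ n) y) x = g x * ψ n x
      rw [hφ n x]
      rfl
    rw [heq]
    have hlim : Tendsto (fun n : ℕ => ∫ x, g x * ψ n x) atTop (nhds (∫ x, g x * h x)) := by
      apply tendsto_integral_of_dominated_convergence (fun x => 3 * ‖g x‖)
      · exact fun n => hg1.aestronglyMeasurable.mul ((hψsmooth n).continuous.aestronglyMeasurable)
      · exact (hg1.norm.const_mul 3)
      · intro n
        filter_upwards with x
        rw [norm_mul]
        calc ‖g x‖ * ‖ψ n x‖ ≤ ‖g x‖ * 3 := by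
              exact mul_le_mul_of_nonneg_left (hψbd n x) (norm_nonneg _)
          _ = 3 * ‖g x‖ := by ring
      · filter_upwards [haeψ] with x hx
        exact hx.const_mul (g x)
    have hval : (∫ x, g x * h x) = (((∫ x, ‖g x‖) : ℝ) : ℂ) := by
      rw [show (fun x => g x * h x) = fun x => ((‖g x‖ : ℝ) : ℂ) from funext hgh]
      exact integral_ofReal
    rw [← hval]
    exact hlim
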